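/- Define a(0) = 0 and a(n) = 5n² − 4n + 1 for n ≥ 1, and b(0) = 18 and b(n) = −2n³(2n−1) for n ≥ 1. Then the convergents p(n)/q(n) of the continued fraction with partial quotients (a(n), b(n)) converge to π² as n → ∞. -/

import Mathlib

open Filter Topology


noncomputable def cc (k : ℕ) : ℝ := ((k.factorial : ℝ))^2 / ((2*k).factorial : ℝ)

lemma fact_pos' (k : ℕ) : (0:ℝ) < (k.factorial : ℝ) := by exact_mod_cast k.factorial_pos

lemma cc_pos (k : ℕ) : 0 < cc k := by
  unfold cc; positivity

lemma cc_zero : cc 0 = 1 := by simp [cc, Nat.factorial]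

lemma cc_one : cc 1 = 1/2 := by norm_num [cc, Nat.factorial]

lemma cc_rel (j : ℕ) : cc j * ((j:ℝ)+1)^2 = cc (j+1) * ((2*(j:ℝ)+2) * (2*(j:ℝ)+1)) := by
  unfold cc
  have h1 : (j+1).factorial = (j+1) * j.factorial := rfl
  have h2 : 2*(j+1) = (2*j+1) + 1 := by ring
  rw [h2]
  have h3 : ((2*j+1)+1).factorial = ((2*j+1)+1) * (2*j+1).factorial := rfl
  have h4 : (2*j+1).factorial = (2*j+1) * (2*j).factorial := rfl
  rw [h1, h3, h4]
  push_cast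
  have := fact_pos' j
  have := fact_pos' (2*j)
  field_simp
  ring

lemma cc_le (n : ℕ) : cc n ≤ (1/2)^n := by
  induction n with
  | zero => simp [cc_zero]
  | succ j ih =>
    have hrel := cc_rel j
    have hj1 : (0:ℝ) < (j:ℝ) + 1 := by positivity
    have key : cc (j+1) ≤ cc j / 2 := by
      have h : cc (j+1) * ((2*(j:ℝ)+2)*(2*(j:ℝ)+1)) = cc j * ((j:ℝ)+1)^2 := hrel.symm
      have hpos : (0:ℝ) < (2*(j:ℝ)+2)*(2*(j:ℝ)+1) := by positivity
      have : cc (j+1) = cc j * ((j:ℝ)+1)^2 / ((2*(j:ℝ)+2)*(2*(j:ℝ)+1)) := by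
        rw [eq_div_iff hpos.ne']; linarith [h]
      rw [this]
      rw [div_le_div_iff₀ hpos (by norm_num)]
      have := (cc_pos j).le
      nlinarith [mul_nonneg this (Nat.cast_nonneg j)]
    calc cc (j+1) ≤ cc j / 2 := key
      _ ≤ (1/2)^j / 2 := by linarith
      _ = (1/2)^(j+1) := by ring

noncomputable def ww (j : ℕ) (θ : ℝ) : ℝ := cc (j+1) * (2*Real.sin θ)^(2*j+2) / ((j:ℝ)+1)^2

noncomputable def ww1 (j : ℕ) (θ : ℝ) : ℝ :=
  cc (j+1) * ((2*(j:ℝ)+2) * (2*Real.sin θ)^(2*j+1) * (2*Real.cos θ)) / ((j:ℝ)+1)^2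

noncomputable def ww2 (j : ℕ) (θ : ℝ) : ℝ :=
  cc (j+1) * ((2*(j:ℝ)+2)*(2*(j:ℝ)+1) * (2*Real.sin θ)^(2*j) * (2*Real.cos θ)^2
    - (2*(j:ℝ)+2) * (2*Real.sin θ)^(2*j+2)) / ((j:ℝ)+1)^2

lemma hs (m : ℕ) (θ : ℝ) :
    HasDerivAt (fun θ => (2*Real.sin θ)^m) ((m:ℝ) * (2*Real.sin θ)^(m-1) * (2*Real.cos θ)) θ :=
  ((Real.hasDerivAt_sin θ).const_mul 2).pow m

lemma ww_deriv (j : ℕ) (θ : ℝ) : HasDerivAt (ww j) (ww1 j θ) θ := by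
  have h := ((hs (2*j+2) θ).const_mul (cc (j+1))).div_const (((j:ℝ)+1)^2)
  refine h.congr_deriv ?_
  unfold ww1
  push_cast
  ring

lemma ww1_deriv (j : ℕ) (θ : ℝ) : HasDerivAt (ww1 j) (ww2 j θ) θ := by
  have hmul : HasDerivAt (fun θ => (2*Real.sin θ)^(2*j+1) * (2*Real.cos θ))
      (((2*j+1:ℕ):ℝ) * (2*Real.sin θ)^(2*j+1-1) * (2*Real.cos θ) * (2*Real.cos θ)
        + (2*Real.sin θ)^(2*j+1) * (2 * -Real.sin θ)) θ :=
    (hs (2*j+1) θ).mul ((Real.hasDerivAt_cos θ).const_mul 2)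
  have h := ((hmul.const_mul ((2*(j:ℝ)+2))).const_mul (cc (j+1))).div_const (((j:ℝ)+1)^2)
  have hfun : ww1 j = fun x => cc (j+1) * ((2*(j:ℝ)+2) * ((2*Real.sin x)^(2*j+1) * (2*Real.cos x))) / ((j:ℝ)+1)^2 := by
    funext x; unfold ww1; ring
  rw [hfun]
  refine h.congr_deriv ?_
  unfold ww2
  have he : 2*j+1-1 = 2*j := rfl
  rw [he]
  have hp : (2*Real.sin θ)^(2*j+2) = (2*Real.sin θ)^(2*j) * (2*Real.sin θ)^2 := by
    rw [← pow_add]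
  rw [hp]
  push_cast
  ring

noncomputable def psi (j : ℕ) (θ : ℝ) : ℝ := 4 * cc j * (2*Real.sin θ)^(2*j)

lemma ww2_eq (j : ℕ) (θ : ℝ) : ww2 j θ = psi j θ - psi (j+1) θ := by
  unfold ww2 psi
  have hcos : (2*Real.cos θ)^2 = 4 - (2*Real.sin θ)^2 := by
    have := Real.sin_sq_add_cos_sq θ
    nlinarith [this]
  have hp : (2*Real.sin θ)^(2*j+2) = (2*Real.sin θ)^(2*j) * (2*Real.sin θ)^2 := by
    rw [← pow_add]
  have hp2 : (2*Real.sin θ)^(2*(j+1)) = (2*Real.sin θ)^(2*j) * (2*Real.sin θ)^2 := by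
    rw [← pow_add]; ring_nf
  have hrel := cc_rel j
  have hj : ((j:ℝ)+1)^2 ≠ 0 := by positivity
  rw [hcos, hp, hp2]
  rw [div_eq_iff hj]
  linear_combination (-4*(2*Real.sin θ)^(2*j)) * hrel

noncomputable def FF (N : ℕ) (θ : ℝ) : ℝ := ∑ j ∈ Finset.range N, ww j θ
noncomputable def FF1 (N : ℕ) (θ : ℝ) : ℝ := ∑ j ∈ Finset.range N, ww1 j θ

lemma FF_deriv (N : ℕ) (θ : ℝ) : HasDerivAt (FF N) (FF1 N θ) θ := by
  unfold FF FF1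
  exact HasDerivAt.fun_sum (fun j _ => ww_deriv j θ)

lemma FF1_deriv (N : ℕ) (θ : ℝ) :
    HasDerivAt (FF1 N) (4 - psi N θ) θ := by
  have h : HasDerivAt (FF1 N) (∑ j ∈ Finset.range N, ww2 j θ) θ := by
    unfold FF1
    exact HasDerivAt.fun_sum (fun j _ => ww1_deriv j θ)
  convert h using 1
  have : ∑ j ∈ Finset.range N, ww2 j θ = ∑ j ∈ Finset.range N, (psi j θ - psi (j+1) θ) := by
    exact Finset.sum_congr rfl (fun j _ => ww2_eq j θ)
  rw [this, Finset.sum_range_sub' (fun j => psi j θ)]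
  unfold psi
  rw [cc_zero]
  norm_num

noncomputable def GG (N : ℕ) (θ : ℝ) : ℝ := FF N θ - 2*θ^2
noncomputable def GG1 (N : ℕ) (θ : ℝ) : ℝ := FF1 N θ - 4*θ

lemma GG_deriv (N : ℕ) (θ : ℝ) : HasDerivAt (GG N) (GG1 N θ) θ := by
  unfold GG GG1
  have h2 : HasDerivAt (fun θ : ℝ => 2*θ^2) (4*θ) θ := by
    have := ((hasDerivAt_id θ).pow 2).const_mul (2:ℝ)
    refine this.congr_deriv ?_; simp; ring
  exact (FF_deriv N θ).sub h2

lemma GG1_deriv (N : ℕ) (θ : ℝ) : HasDerivAt (GG1 N) (-psi N θ) θ := by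
  unfold GG1
  have h2 : HasDerivAt (fun θ : ℝ => 4*θ) (4:ℝ) θ := by
    simpa using (hasDerivAt_id θ).const_mul (4:ℝ)
  have := (FF1_deriv N θ).sub h2
  refine this.congr_deriv ?_; ring

lemma psi_bound (N : ℕ) {θ : ℝ} (h0 : 0 ≤ θ) (h1 : θ ≤ Real.pi/6) :
    ‖-psi N θ‖ ≤ 4 * cc N := by
  have hsin0 : 0 ≤ Real.sin θ := Real.sin_nonneg_of_nonneg_of_le_pi h0
    (h1.trans (by linarith [Real.pi_pos]))
  have hsin : Real.sin θ ≤ 1/2 := by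
    have := Real.sin_le_sin_of_le_of_le_pi_div_two (by linarith [Real.pi_pos]) (by linarith [Real.pi_pos]) h1
    rwa [Real.sin_pi_div_six] at this
  have hb : (2*Real.sin θ)^(2*N) ≤ 1 := by
    apply pow_le_one₀ (by linarith) (by linarith)
  have hnn : 0 ≤ (2*Real.sin θ)^(2*N) := by positivity
  have := cc_pos N
  rw [norm_neg]
  unfold psi
  rw [Real.norm_eq_abs, abs_of_nonneg (by positivity)]
  nlinarith

lemma GG1_bound (N : ℕ) : ∀ θ ∈ Set.Icc 0 (Real.pi/6), ‖GG1 N θ‖ ≤ 4 * cc N := by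
  intro θ hθ
  have h := norm_image_sub_le_of_norm_deriv_le_segment'
    (f := GG1 N) (f' := fun θ => -psi N θ) (a := 0) (b := Real.pi/6) (C := 4 * cc N)
    (fun x _ => (GG1_deriv N x).hasDerivWithinAt)
    (fun x hx => psi_bound N hx.1 hx.2.le) θ hθ
  have hG0 : GG1 N 0 = 0 := by
    unfold GG1 FF1
    have : ∀ j ∈ Finset.range N, ww1 j 0 = 0 := by
      intro j _
      unfold ww1
      simp
    rw [Finset.sum_eq_zero this]
    ring
  rw [hG0, sub_zero] at h
  calc ‖GG1 N θ‖ ≤ 4 * cc N * (θ - 0) := h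
    _ ≤ 4 * cc N * 1 := by
        have := cc_pos N
        have h6 : θ ≤ 1 := by
          have := hθ.2
          have := Real.pi_le_four
          linarith
        have := hθ.1
        nlinarith
    _ = 4 * cc N := by ring

lemma GG_bound (N : ℕ) : ‖GG N (Real.pi/6)‖ ≤ 4 * cc N := by
  have hmem : Real.pi/6 ∈ Set.Icc (0:ℝ) (Real.pi/6) := by
    constructor
    · positivity
    · exact le_refl _
  have h := norm_image_sub_le_of_norm_deriv_le_segment'
    (f := GG N) (f' := GG1 N) (a := 0) (b := Real.pi/6) (C := 4 * cc N)
    (fun x _ => (GG_deriv N x).hasDerivWithinAt)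
    (fun x hx => GG1_bound N x ⟨hx.1, hx.2.le⟩) (Real.pi/6) hmem
  have hG0 : GG N 0 = 0 := by
    unfold GG FF
    have : ∀ j ∈ Finset.range N, ww j 0 = 0 := by
      intro j _
      unfold ww
      simp
    rw [Finset.sum_eq_zero this]
    ring
  rw [hG0, sub_zero] at h
  calc ‖GG N (Real.pi/6)‖ ≤ 4 * cc N * (Real.pi/6 - 0) := h
    _ ≤ 4 * cc N := by
        have := cc_pos N
        have := Real.pi_le_four
        nlinarith

noncomputable def SS (N : ℕ) : ℝ := ∑ j ∈ Finset.range N, 18 * cc (j+1) / ((j:ℝ)+1)^2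

lemma SS_close (N : ℕ) : ‖SS N - Real.pi^2‖ ≤ 72 * (1/2)^N := by
  have hFF : FF N (Real.pi/6) = SS N / 18 := by
    unfold FF SS ww
    rw [Finset.sum_div]
    apply Finset.sum_congr rfl
    intro j _
    rw [Real.sin_pi_div_six]
    norm_num
    ring
  have hG := GG_bound N
  unfold GG at hG
  rw [hFF] at hG
  have h2 : SS N / 18 - 2*(Real.pi/6)^2 = (SS N - Real.pi^2)/18 := by ring
  rw [h2] at hG
  rw [Real.norm_eq_abs, abs_div] at hG
  have hcc := cc_le N
  have : |SS N - Real.pi^2| ≤ 72 * cc N := by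
    rw [show |(18:ℝ)| = 18 by norm_num] at hG
    linarith [(div_le_iff₀ (by norm_num : (0:ℝ) < 18)).mp hG]
  rw [Real.norm_eq_abs]
  linarith

lemma SS_tendsto : Filter.Tendsto SS atTop (𝓝 (Real.pi^2)) := by
  have h0 : Filter.Tendsto (fun N : ℕ => SS N - Real.pi^2) atTop (𝓝 0) := by
    apply squeeze_zero_norm (fun N => SS_close N)
    have : Filter.Tendsto (fun N : ℕ => (72:ℝ) * (1/2)^N) atTop (𝓝 (72 * 0)) := by
      apply Filter.Tendsto.const_mul
      apply tendsto_pow_atTop_nhds_zero_of_lt_one <;> norm_num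
    simpa using this
  have := h0.add_const (Real.pi^2)
  simpa using this

lemma hf1 (m : ℕ) : (((2*(m+1)).factorial : ℕ) : ℝ)
    = (2*(m:ℝ)+2)*(2*(m:ℝ)+1) * (((2*m).factorial : ℕ) : ℝ) := by
  have h : 2*(m+1) = (2*m+1)+1 := by ring
  rw [h, Nat.factorial_succ, Nat.factorial_succ]
  push_cast
  ring

lemma hkey (n : ℕ) : (((2*(n+2)).factorial : ℕ) : ℝ) * (18*cc (n+2)/((n:ℝ)+2)^2)
    = (2*((n:ℝ)+1)^3*(2*((n:ℝ)+1)-1)) * (((2*n).factorial : ℕ) : ℝ) * (18*cc (n+1)/((n:ℝ)+1)^2) := by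
  unfold cc
  rw [hf1 (n+1), hf1 n]
  have e1 : (n+2).factorial = (n+2) * (n+1).factorial := rfl
  have e2 : (n+1).factorial = (n+1) * n.factorial := rfl
  rw [e1, e2]
  have h1 := fact_pos' n
  have h2 := fact_pos' (2*n)
  have h3 : ((n:ℝ)+1) ≠ 0 := by positivity
  have h4 : ((n:ℝ)+2) ≠ 0 := by positivity
  have h5 : (2*(n:ℝ)+1) ≠ 0 := by positivity
  have h6 : (2*(n:ℝ)+2) ≠ 0 := by positivity
  have h7 : (2*((n:ℝ)+1)+1) ≠ 0 := by positivity
  have h8 : (2*((n:ℝ)+1)+2) ≠ 0 := by positivity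
  push_cast
  field_simp
  ring

theorem stmt_17aux
    (a b p q : ℕ → ℝ)
    (ha0 : a 0 = 0)
    (ha : ∀ n : ℕ, 1 ≤ n → a n = 5 * (n : ℝ) ^ 2 - 4 * (n : ℝ) + 1)
    (hb0 : b 0 = 18)
    (hb : ∀ n : ℕ, 1 ≤ n → b n = -(2 * (n : ℝ) ^ 3 * (2 * (n : ℝ) - 1)))
    (hp0 : p 0 = a 0) (hq0 : q 0 = 1)
    (hp1 : p 1 = a 0 * a 1 + b 0) (hq1 : q 1 = a 1)
    (hp : ∀ n : ℕ, p (n + 2) = a (n + 2) * p (n + 1) + b (n + 1) * p n)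
    (hq : ∀ n : ℕ, q (n + 2) = a (n + 2) * q (n + 1) + b (n + 1) * q n) :
    Filter.Tendsto (fun n => p n / q n) atTop (𝓝 (Real.pi ^ 2)) := by
  set f : ℕ → ℝ := fun n => (((2*n).factorial : ℕ) : ℝ) with hf
  have hfpos : ∀ n, 0 < f n := fun n => fact_pos' (2*n)
  -- the q recurrence identity
  have hqid : ∀ n : ℕ, f (n+2) = a (n+2) * f (n+1) + b (n+1) * f n := by
    intro n
    rw [ha (n+2) (by omega), hb (n+1) (by omega)]
    simp only [hf]
    rw [hf1 (n+1), hf1 n]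
    push_cast
    ring
  have key : ∀ n : ℕ, (q n = f n ∧ p n = f n * SS n) ∧
      (q (n+1) = f (n+1) ∧ p (n+1) = f (n+1) * SS (n+1)) := by
    intro n
    induction n with
    | zero =>
      have hS0 : SS 0 = 0 := by simp [SS]
      have hS1 : SS 1 = 9 := by
        norm_num [SS, Finset.sum_range_one, cc_one]
      have hq0' : q 0 = f 0 := by simp [hq0, hf, Nat.factorial]
      have hp0' : p 0 = f 0 * SS 0 := by rw [hp0, ha0, hS0]; ring
      have ha1 : a 1 = 2 := by rw [ha 1 (by omega)]; norm_num
      have hq1' : q 1 = f 1 := by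
        rw [hq1, ha1]; norm_num [hf, Nat.factorial]
      have hp1' : p 1 = f 1 * SS 1 := by
        rw [hp1, ha0, hb0, hS1]
        simp only [hf]
        norm_num [Nat.factorial]
      exact ⟨⟨hq0', hp0'⟩, ⟨hq1', hp1'⟩⟩
    | succ n ih =>
      obtain ⟨⟨hqn, hpn⟩, hqn1, hpn1⟩ := ih
      refine ⟨⟨hqn1, hpn1⟩, ?_, ?_⟩
      · rw [hq n, hqn1, hqn, ← hqid n]
      · rw [hp n, hpn1, hpn]
        have hS2 : SS (n+2) = SS (n+1) + 18 * cc (n+2) / ((n:ℝ)+2)^2 := by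
          rw [SS, Finset.sum_range_succ, ← SS]
          try push_cast
          try ring
        have hS1' : SS (n+1) = SS n + 18 * cc (n+1) / ((n:ℝ)+1)^2 := by
          rw [SS, Finset.sum_range_succ, ← SS]
          try push_cast
          try ring
        have hS1 : SS n = SS (n+1) - 18 * cc (n+1) / ((n:ℝ)+1)^2 := by linarith
        rw [hS2, hS1]
        have hk := hkey n
        have hid := hqid n
        rw [hb (n+1) (by omega)] at hid ⊢
        simp only [hf] at *
        simp only [show n+1+1 = n+2 from rfl] at *
        push_cast at hid hk ⊢
        linear_combination (-(SS (n+1))) * hid - hk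
  have heq : ∀ n : ℕ, p n / q n = SS n := by
    intro n
    obtain ⟨⟨hqn, hpn⟩, _⟩ := key n
    rw [hqn, hpn]
    exact mul_div_cancel_left₀ _ (hfpos n).ne'
  have := SS_tendsto
  exact this.congr (fun n => (heq n).symm)


theorem stmt_17 
    (a b p q : ℕ → ℝ)
    (ha0 : a 0 = 0)
    (ha : ∀ n : ℕ, 1 ≤ n → a n = 5 * (n : ℝ) ^ 2 - 4 * (n : ℝ) + 1)
    (hb0 : b 0 = 18)
    (hb : ∀ n : ℕ, 1 ≤ n → b n = -(2 * (n : ℝ) ^ 3 * (2 * (n : ℝ) - 1)))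
    (hp0 : p 0 = a 0) (hq0 : q 0 = 1)
    (hp1 : p 1 = a 0 * a 1 + b 0) (hq1 : q 1 = a 1)
    (hp : ∀ n : ℕ, p (n + 2) = a (n + 2) * p (n + 1) + b (n + 1) * p n)
    (hq : ∀ n : ℕ, q (n + 2) = a (n + 2) * q (n + 1) + b (n + 1) * q n) :
    Tendsto (fun n => p n / q n) atTop (𝓝 (Real.pi ^ 2)) := by
  exact stmt_17aux a b p q ha0 ha hb0 hb hp0 hq0 hp1 hq1 hp hq
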